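/- arXiv:2207.14655 — 7 statements merged into one kernel-verified Lean document; each statement's English description precedes it below -/
import Mathlib

section
/- For the system ẋ = x(1-gx-hy), ẏ = y(-3-gx-hy), ż = z(1+gx+hy+kz) (Case 5), the polynomials l₁ = 1+kz+(1/2)kz(hy-gx) and l₂ = 1-gx+(1/3)hy satisfy χ(l₁) = kz·l₁ and χ(l₂) = (-gx-hy)·l₂. -/
theorem case5_invariant_surfaces (g h k : ℝ) :
    ∀ p : ℝ × ℝ × ℝ,
      fderiv ℝ (fun q : ℝ × ℝ × ℝ => 1 + k*q.2.2 + (1/2)*k*q.2.2*(h*q.2.1 - g*q.1)) p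
        (p.1*(1 - g*p.1 - h*p.2.1),
         p.2.1*(-3 - g*p.1 - h*p.2.1),
         p.2.2*(1 + g*p.1 + h*p.2.1 + k*p.2.2)) =
      (k*p.2.2) * (1 + k*p.2.2 + (1/2)*k*p.2.2*(h*p.2.1 - g*p.1)) ∧
      fderiv ℝ (fun q : ℝ × ℝ × ℝ => 1 - g*q.1 + (1/3)*h*q.2.1) p
        (p.1*(1 - g*p.1 - h*p.2.1),
         p.2.1*(-3 - g*p.1 - h*p.2.1),
         p.2.2*(1 + g*p.1 + h*p.2.1 + k*p.2.2)) =
      (-(g*p.1) - h*p.2.1) * (1 - g*p.1 + (1/3)*h*p.2.1) := by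
  intro p
  have hx : HasFDerivAt (fun q : ℝ × ℝ × ℝ => q.1)
      (ContinuousLinearMap.fst ℝ ℝ (ℝ × ℝ)) p := hasFDerivAt_fst
  have hy : HasFDerivAt (fun q : ℝ × ℝ × ℝ => q.2.1)
      ((ContinuousLinearMap.fst ℝ ℝ ℝ).comp (ContinuousLinearMap.snd ℝ ℝ (ℝ × ℝ))) p :=
    hasFDerivAt_fst.comp p hasFDerivAt_snd
  have hz : HasFDerivAt (fun q : ℝ × ℝ × ℝ => q.2.2)
      ((ContinuousLinearMap.snd ℝ ℝ ℝ).comp (ContinuousLinearMap.snd ℝ ℝ (ℝ × ℝ))) p :=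
    hasFDerivAt_snd.comp p hasFDerivAt_snd
  have h1 : HasFDerivAt (fun q : ℝ × ℝ × ℝ =>
      1 + k*q.2.2 + (1/2)*k*q.2.2*(h*q.2.1 - g*q.1)) _ p :=
    (((hasFDerivAt_const (1:ℝ) p).add (hz.const_mul k)).add
      ((hz.const_mul ((1/2)*k)).mul ((hy.const_mul h).sub (hx.const_mul g))))
  have h2 : HasFDerivAt (fun q : ℝ × ℝ × ℝ =>
      1 - g*q.1 + (1/3)*h*q.2.1) _ p :=
    (((hasFDerivAt_const (1:ℝ) p).sub (hx.const_mul g)).add (hy.const_mul ((1/3)*h)))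
  constructor
  · rw [h1.fderiv]
    simp [ContinuousLinearMap.add_apply, ContinuousLinearMap.smul_apply,
      ContinuousLinearMap.comp_apply]
    ring
  · rw [h2.fderiv]
    simp [ContinuousLinearMap.add_apply, ContinuousLinearMap.smul_apply,
      ContinuousLinearMap.comp_apply]
    ring
end

section
/- For the system of Case 5 (ẋ = x(1-gx-hy), ẏ = y(-3-gx-hy), ż = z(1+gx+hy+kz)), the change of variables X = x l₂⁻¹, Y = y l₂⁻¹, Z = z l₁⁻¹ l₂, with l₁ = 1+kz+(1/2)kz(hy-gx) and l₂ = 1-gx+(1/3)hy, transforms the system into the linear system Ẋ = X, Ẏ = -3Y, Ż = Z on the region where l₁ l₂ ≠ 0. -/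
theorem case5_linearization (g h k : ℝ) (x y z : ℝ → ℝ)
    (hx : ∀ t, HasDerivAt x (x t * (1 - g*x t - h*y t)) t)
    (hy : ∀ t, HasDerivAt y (y t * (-3 - g*x t - h*y t)) t)
    (hz : ∀ t, HasDerivAt z (z t * (1 + g*x t + h*y t + k*z t)) t)
    (hl : ∀ t, (1 + k*z t + (1/2)*k*z t*(h*y t - g*x t)) *
               (1 - g*x t + (1/3)*h*y t) ≠ 0) :
    ∀ t,
      HasDerivAt (fun s => x s / (1 - g*x s + (1/3)*h*y s))
        (x t / (1 - g*x t + (1/3)*h*y t)) t ∧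
      HasDerivAt (fun s => y s / (1 - g*x s + (1/3)*h*y s))
        (-3 * (y t / (1 - g*x t + (1/3)*h*y t))) t ∧
      HasDerivAt (fun s => z s * (1 - g*x s + (1/3)*h*y s) /
          (1 + k*z s + (1/2)*k*z s*(h*y s - g*x s)))
        (z t * (1 - g*x t + (1/3)*h*y t) /
          (1 + k*z t + (1/2)*k*z t*(h*y t - g*x t))) t := by
  intro t
  have hl1 : (1 + k*z t + (1/2)*k*z t*(h*y t - g*x t)) ≠ 0 :=
    left_ne_zero_of_mul (hl t)
  have hl2 : (1 - g*x t + (1/3)*h*y t) ≠ 0 :=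
    right_ne_zero_of_mul (hl t)
  have hL2 : HasDerivAt (fun s => 1 - g*x s + (1/3)*h*y s)
      (-(g * (x t * (1 - g*x t - h*y t))) + (1/3)*h * (y t * (-3 - g*x t - h*y t))) t := by
    have := ((hasDerivAt_const t (1:ℝ)).sub ((hx t).const_mul g)).add ((hy t).const_mul ((1/3)*h))
    convert this using 1 <;> first | rfl | ring
  have hL1 : HasDerivAt (fun s => 1 + k*z s + (1/2)*k*z s*(h*y s - g*x s))
      (k * (z t * (1 + g*x t + h*y t + k*z t)) +
        ((1/2)*k * (z t * (1 + g*x t + h*y t + k*z t)) * (h*y t - g*x t) +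
         (1/2)*k*z t * (h * (y t * (-3 - g*x t - h*y t)) - g * (x t * (1 - g*x t - h*y t))))) t := by
    have := ((hasDerivAt_const t (1:ℝ)).add ((hz t).const_mul k)).add
      ((((hz t).const_mul ((1/2)*k)).mul (((hy t).const_mul h).sub ((hx t).const_mul g))))
    convert this using 1 <;> first | rfl | (simp only [Pi.sub_apply]; ring)
  refine ⟨?_, ?_, ?_⟩
  · have := (hx t).div hL2 hl2
    convert this using 1
    all_goals try rfl
    rw [div_eq_div_iff hl2 (pow_ne_zero 2 hl2)]
    ring
  · have := (hy t).div hL2 hl2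
    convert this using 1
    all_goals try rfl
    rw [← mul_div_assoc, div_eq_div_iff hl2 (pow_ne_zero 2 hl2)]
    ring
  · have := ((hz t).mul hL2).div hL1 hl1
    convert this using 1
    all_goals try rfl
    simp only [Pi.mul_apply]
    rw [div_eq_div_iff hl1 (pow_ne_zero 2 hl1)]
    ring
end

section
/- For the system ẋ = x(1+ax+cz), ẏ = y(-3-ax-hy), ż = z(1+3ax+hy+2cz) (Case 22), the polynomial l = (1+ax)² + cz(2+hy) satisfies χ(l) = 2(ax+cz)·l, and consequently Φ = x²yz l⁻² is a first integral on the set where l ≠ 0. -/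
open ContinuousLinearMap

theorem case22_surface_and_integral (a c h : ℝ) :
    ∀ p : ℝ × ℝ × ℝ,
      (fderiv ℝ (fun q : ℝ × ℝ × ℝ => (1 + a*q.1)^2 + c*q.2.2*(2 + h*q.2.1)) p
        (p.1*(1 + a*p.1 + c*p.2.2),
         p.2.1*(-3 - a*p.1 - h*p.2.1),
         p.2.2*(1 + 3*a*p.1 + h*p.2.1 + 2*c*p.2.2)) =
      2*(a*p.1 + c*p.2.2) * ((1 + a*p.1)^2 + c*p.2.2*(2 + h*p.2.1))) ∧
      (((1 + a*p.1)^2 + c*p.2.2*(2 + h*p.2.1)) ≠ 0 →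
      fderiv ℝ (fun q : ℝ × ℝ × ℝ => q.1^2 * q.2.1 * q.2.2 * ((1 + a*q.1)^2 + c*q.2.2*(2 + h*q.2.1))⁻¹^2) p
        (p.1*(1 + a*p.1 + c*p.2.2),
         p.2.1*(-3 - a*p.1 - h*p.2.1),
         p.2.2*(1 + 3*a*p.1 + h*p.2.1 + 2*c*p.2.2)) = 0) := by
  intro p
  obtain ⟨x, y, z⟩ := p
  simp only [pow_two]
  have hx : HasFDerivAt (fun q : ℝ×ℝ×ℝ => q.1)
      (ContinuousLinearMap.fst ℝ ℝ (ℝ×ℝ)) (x,y,z) := hasFDerivAt_fst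
  have hy : HasFDerivAt (fun q : ℝ×ℝ×ℝ => q.2.1)
      ((ContinuousLinearMap.fst ℝ ℝ ℝ).comp (ContinuousLinearMap.snd ℝ ℝ (ℝ×ℝ))) (x,y,z) :=
    hasFDerivAt_fst.comp _ hasFDerivAt_snd
  have hz : HasFDerivAt (fun q : ℝ×ℝ×ℝ => q.2.2)
      ((ContinuousLinearMap.snd ℝ ℝ ℝ).comp (ContinuousLinearMap.snd ℝ ℝ (ℝ×ℝ))) (x,y,z) :=
    hasFDerivAt_snd.comp _ hasFDerivAt_snd
  have hl : HasFDerivAt (fun q : ℝ×ℝ×ℝ => (1 + a*q.1)*(1 + a*q.1) + c*q.2.2*(2 + h*q.2.1)) _ (x,y,z) :=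
    ((((hasFDerivAt_const (1:ℝ) _).add ((hasFDerivAt_const a _).mul hx)).mul ((hasFDerivAt_const (1:ℝ) _).add ((hasFDerivAt_const a _).mul hx))).add
      (((hasFDerivAt_const c _).mul hz).mul ((hasFDerivAt_const (2:ℝ) _).add
        ((hasFDerivAt_const h _).mul hy))))
  constructor
  · rw [hl.fderiv]
    simp
    ring
  · intro hne
    have hΦ : HasFDerivAt (fun q : ℝ×ℝ×ℝ => q.1*q.1 * q.2.1 * q.2.2 *
        (((1 + a*q.1)*(1 + a*q.1) + c*q.2.2*(2 + h*q.2.1))⁻¹*((1 + a*q.1)*(1 + a*q.1) + c*q.2.2*(2 + h*q.2.1))⁻¹)) _ (x,y,z) :=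
      ((((hx.mul hx).mul hy).mul hz).mul (((hasFDerivAt_inv hne).comp (x,y,z) hl).mul ((hasFDerivAt_inv hne).comp (x,y,z) hl)))
    rw [hΦ.fderiv]
    simp
    field_simp
    ring
end

section
/- For the system ẋ = x(1-gx-hy+3kz), ẏ = y(-3-gx-hy-kz), ż = z(1+gx+hy+kz) (Case 23), the polynomial l = (1+kz)² + kz(hy-gx) satisfies χ(l) = 2kz·l, and Φ = xyz² l⁻² is a first integral wherever l ≠ 0. -/
theorem case23_surface_and_integral (g h k : ℝ) :
    ∀ p : ℝ × ℝ × ℝ,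
      (fderiv ℝ (fun q : ℝ × ℝ × ℝ => (1 + k*q.2.2)^2 + k*q.2.2*(h*q.2.1 - g*q.1)) p
        (p.1*(1 - g*p.1 - h*p.2.1 + 3*k*p.2.2),
         p.2.1*(-3 - g*p.1 - h*p.2.1 - k*p.2.2),
         p.2.2*(1 + g*p.1 + h*p.2.1 + k*p.2.2)) =
      2*k*p.2.2 * ((1 + k*p.2.2)^2 + k*p.2.2*(h*p.2.1 - g*p.1))) ∧
      (((1 + k*p.2.2)^2 + k*p.2.2*(h*p.2.1 - g*p.1)) ≠ 0 →
      fderiv ℝ (fun q : ℝ × ℝ × ℝ => q.1 * q.2.1 * q.2.2^2 * ((1 + k*q.2.2)^2 + k*q.2.2*(h*q.2.1 - g*q.1))⁻¹^2) p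
        (p.1*(1 - g*p.1 - h*p.2.1 + 3*k*p.2.2),
         p.2.1*(-3 - g*p.1 - h*p.2.1 - k*p.2.2),
         p.2.2*(1 + g*p.1 + h*p.2.1 + k*p.2.2)) = 0) := by
  intro p
  simp only [pow_two]
  have hx : HasFDerivAt (fun q : ℝ × ℝ × ℝ => q.1)
      (ContinuousLinearMap.fst ℝ ℝ (ℝ × ℝ)) p := hasFDerivAt_fst
  have hy : HasFDerivAt (fun q : ℝ × ℝ × ℝ => q.2.1)
      ((ContinuousLinearMap.fst ℝ ℝ ℝ).comp (ContinuousLinearMap.snd ℝ ℝ (ℝ × ℝ))) p :=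
    hasFDerivAt_fst.comp p hasFDerivAt_snd
  have hz : HasFDerivAt (fun q : ℝ × ℝ × ℝ => q.2.2)
      ((ContinuousLinearMap.snd ℝ ℝ ℝ).comp (ContinuousLinearMap.snd ℝ ℝ (ℝ × ℝ))) p :=
    hasFDerivAt_snd.comp p hasFDerivAt_snd
  have h1 : HasFDerivAt (fun q : ℝ × ℝ × ℝ => 1 + k*q.2.2) _ p :=
    (hasFDerivAt_const (1:ℝ) p).add (hz.const_mul k)
  have hl : HasFDerivAt (fun q : ℝ × ℝ × ℝ =>
      (1 + k*q.2.2)*(1 + k*q.2.2) + k*q.2.2*(h*q.2.1 - g*q.1)) _ p :=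
    (h1.mul h1).add ((hz.const_mul k).mul ((hy.const_mul h).sub (hx.const_mul g)))
  constructor
  · rw [hl.fderiv]
    simp
    ring
  · intro hne
    have hi : HasFDerivAt (fun q : ℝ × ℝ × ℝ =>
        ((1 + k*q.2.2)*(1 + k*q.2.2) + k*q.2.2*(h*q.2.1 - g*q.1))⁻¹) _ p :=
      (hasDerivAt_inv hne).comp_hasFDerivAt p hl
    have hΦ : HasFDerivAt (fun q : ℝ × ℝ × ℝ =>
        q.1 * q.2.1 * (q.2.2*q.2.2) *
        (((1 + k*q.2.2)*(1 + k*q.2.2) + k*q.2.2*(h*q.2.1 - g*q.1))⁻¹ *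
         ((1 + k*q.2.2)*(1 + k*q.2.2) + k*q.2.2*(h*q.2.1 - g*q.1))⁻¹)) _ p :=
      ((hx.mul hy).mul (hz.mul hz)).mul (hi.mul hi)
    rw [hΦ.fderiv]
    simp
    field_simp
    ring
end

section
/- For the system ẋ = x(1+ax+by-kz), ẏ = y(-3-3ax-3by-kz), ż = z(1+3ax-5by+kz) (Case 24), the polynomials l₁ = (1+ax+by)² + kz(ax-by) and l₂ = (1+ax+by+kz)² - 4bkyz satisfy χ(l₁) = (2ax-6by)·l₁ and χ(l₂) = (2ax-6by+2kz)·l₂. -/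
theorem case24_invariant_surfaces (a b k : ℝ) :
    ∀ p : ℝ × ℝ × ℝ,
      fderiv ℝ (fun q : ℝ × ℝ × ℝ => (1 + a*q.1 + b*q.2.1)^2 + k*q.2.2*(a*q.1 - b*q.2.1)) p
        (p.1*(1 + a*p.1 + b*p.2.1 - k*p.2.2),
         p.2.1*(-3 - 3*a*p.1 - 3*b*p.2.1 - k*p.2.2),
         p.2.2*(1 + 3*a*p.1 - 5*b*p.2.1 + k*p.2.2)) =
      (2*a*p.1 - 6*b*p.2.1) * ((1 + a*p.1 + b*p.2.1)^2 + k*p.2.2*(a*p.1 - b*p.2.1)) ∧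
      fderiv ℝ (fun q : ℝ × ℝ × ℝ => (1 + a*q.1 + b*q.2.1 + k*q.2.2)^2 - 4*b*k*q.2.1*q.2.2) p
        (p.1*(1 + a*p.1 + b*p.2.1 - k*p.2.2),
         p.2.1*(-3 - 3*a*p.1 - 3*b*p.2.1 - k*p.2.2),
         p.2.2*(1 + 3*a*p.1 - 5*b*p.2.1 + k*p.2.2)) =
      (2*a*p.1 - 6*b*p.2.1 + 2*k*p.2.2) * ((1 + a*p.1 + b*p.2.1 + k*p.2.2)^2 - 4*b*k*p.2.1*p.2.2) := by
  intro p
  have hx : HasFDerivAt (fun q : ℝ × ℝ × ℝ => q.1)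
      (ContinuousLinearMap.fst ℝ ℝ (ℝ × ℝ)) p := hasFDerivAt_fst
  have hy : HasFDerivAt (fun q : ℝ × ℝ × ℝ => q.2.1)
      ((ContinuousLinearMap.fst ℝ ℝ ℝ).comp (ContinuousLinearMap.snd ℝ ℝ (ℝ × ℝ))) p :=
    hasFDerivAt_fst.comp p hasFDerivAt_snd
  have hz : HasFDerivAt (fun q : ℝ × ℝ × ℝ => q.2.2)
      ((ContinuousLinearMap.snd ℝ ℝ ℝ).comp (ContinuousLinearMap.snd ℝ ℝ (ℝ × ℝ))) p :=
    hasFDerivAt_snd.comp p hasFDerivAt_snd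
  have hu : HasFDerivAt (fun q : ℝ × ℝ × ℝ => 1 + a*q.1 + b*q.2.1) _ p :=
    ((hasFDerivAt_const 1 p).add (hx.const_mul a)).add (hy.const_mul b)
  have h1 : HasFDerivAt
      (fun q : ℝ × ℝ × ℝ => (1 + a*q.1 + b*q.2.1)*(1 + a*q.1 + b*q.2.1) + k*q.2.2*(a*q.1 - b*q.2.1)) _ p :=
    (hu.mul hu).add ((hz.const_mul k).mul ((hx.const_mul a).sub (hy.const_mul b)))
  have hv : HasFDerivAt (fun q : ℝ × ℝ × ℝ => 1 + a*q.1 + b*q.2.1 + k*q.2.2) _ p :=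
    hu.add (hz.const_mul k)
  have h2 : HasFDerivAt
      (fun q : ℝ × ℝ × ℝ => (1 + a*q.1 + b*q.2.1 + k*q.2.2)*(1 + a*q.1 + b*q.2.1 + k*q.2.2) - 4*b*k*q.2.1*q.2.2) _ p :=
    (hv.mul hv).sub ((hy.const_mul (4*b*k)).mul hz)
  simp only [pow_two]
  rw [h1.fderiv, h2.fderiv]
  constructor <;>
  · simp [ContinuousLinearMap.add_apply, ContinuousLinearMap.sub_apply,
      ContinuousLinearMap.smul_apply, ContinuousLinearMap.comp_apply,
      ContinuousLinearMap.coe_fst', ContinuousLinearMap.coe_snd', smul_eq_mul]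
    ring
end

section
/- For the system ẋ = x(1+ax-5hy+3kz), ẏ = y(-3-3hy-3kz), ż = z(1+hy+kz) (Case 37), the polynomial l = (1+hy+kz)² + (1/2)ax(2-hy+kz) satisfies χ(l) = (ax-6hy+2kz)·l, and both φ₁ = x³y l⁻³ and φ₂ = yz³ are first integrals wherever l ≠ 0. -/
private lemma hfd_sq {E : Type*} [NormedAddCommGroup E] [NormedSpace ℝ E]
    {f : E → ℝ} {f' : E →L[ℝ] ℝ} {p : E} (hf : HasFDerivAt f f' p) :
    HasFDerivAt (fun q => f q ^ 2) ((2 * f p) • f') p := by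
  have h := hf.mul hf
  have hfun : (f * f) = (fun q => f q ^ 2) := funext fun q => (sq (f q)).symm
  rw [hfun] at h
  refine h.congr_fderiv ?_
  ext v
  simp [smul_eq_mul]
  ring

private lemma hfd_cube {E : Type*} [NormedAddCommGroup E] [NormedSpace ℝ E]
    {f : E → ℝ} {f' : E →L[ℝ] ℝ} {p : E} (hf : HasFDerivAt f f' p) :
    HasFDerivAt (fun q => f q ^ 3) ((3 * f p ^ 2) • f') p := by
  have h := (hfd_sq hf).mul hf
  have hfun : ((fun q => f q ^ 2) * f) = (fun q => f q ^ 3) := funext fun q => by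
    show f q ^ 2 * f q = f q ^ 3; ring
  rw [hfun] at h
  refine h.congr_fderiv ?_
  ext v
  simp [smul_eq_mul]
  ring

private lemma hfd_inv {E : Type*} [NormedAddCommGroup E] [NormedSpace ℝ E]
    {f : E → ℝ} {f' : E →L[ℝ] ℝ} {p : E} (hf : HasFDerivAt f f' p) (h0 : f p ≠ 0) :
    HasFDerivAt (fun q => (f q)⁻¹) ((-(f p ^ 2)⁻¹) • f') p := by
  have hcomp := (hasFDerivAt_inv h0).comp p hf
  refine hcomp.congr_fderiv ?_
  ext v
  simp [smul_eq_mul]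
  ring

private lemma first_integral_aux {E : Type*} [NormedAddCommGroup E] [NormedSpace ℝ E]
    {l f : E → ℝ} {l' f' : E →L[ℝ] ℝ} {p : E}
    (hl : HasFDerivAt l l' p) (hf : HasFDerivAt f f' p) (hne : l p ≠ 0)
    (v : E) (M : ℝ) (h1 : l' v = M * l p) (h2 : f' v = 3 * M * f p) :
    fderiv ℝ (fun q => f q * (l q)⁻¹ ^ 3) p v = 0 := by
  have hfin := hf.mul (hfd_cube (hfd_inv hl hne))
  rw [show (fun q => f q * (l q)⁻¹ ^ 3) = (f * fun q => (l q)⁻¹ ^ 3) from rfl, hfin.fderiv]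
  simp only [ContinuousLinearMap.add_apply, ContinuousLinearMap.smul_apply, smul_eq_mul]
  rw [h1, h2]
  field_simp
  ring

theorem case37_surface_and_integrals (a h k : ℝ) :
    ∀ p : ℝ × ℝ × ℝ,
      (fderiv ℝ (fun q : ℝ × ℝ × ℝ => (1 + h*q.2.1 + k*q.2.2)^2 + (1/2)*a*q.1*(2 - h*q.2.1 + k*q.2.2)) p
        (p.1*(1 + a*p.1 - 5*h*p.2.1 + 3*k*p.2.2),
         p.2.1*(-3 - 3*h*p.2.1 - 3*k*p.2.2),
         p.2.2*(1 + h*p.2.1 + k*p.2.2)) =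
      (a*p.1 - 6*h*p.2.1 + 2*k*p.2.2) * ((1 + h*p.2.1 + k*p.2.2)^2 + (1/2)*a*p.1*(2 - h*p.2.1 + k*p.2.2))) ∧
      (((1 + h*p.2.1 + k*p.2.2)^2 + (1/2)*a*p.1*(2 - h*p.2.1 + k*p.2.2)) ≠ 0 →
      fderiv ℝ (fun q : ℝ × ℝ × ℝ => q.1^3 * q.2.1 * ((1 + h*q.2.1 + k*q.2.2)^2 + (1/2)*a*q.1*(2 - h*q.2.1 + k*q.2.2))⁻¹^3) p
        (p.1*(1 + a*p.1 - 5*h*p.2.1 + 3*k*p.2.2),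
         p.2.1*(-3 - 3*h*p.2.1 - 3*k*p.2.2),
         p.2.2*(1 + h*p.2.1 + k*p.2.2)) = 0 ∧
      fderiv ℝ (fun q : ℝ × ℝ × ℝ => q.2.1 * q.2.2^3) p
        (p.1*(1 + a*p.1 - 5*h*p.2.1 + 3*k*p.2.2),
         p.2.1*(-3 - 3*h*p.2.1 - 3*k*p.2.2),
         p.2.2*(1 + h*p.2.1 + k*p.2.2)) = 0) := by
  rintro ⟨x, y, z⟩
  have hx : HasFDerivAt (fun q : ℝ × ℝ × ℝ => q.1)
      (ContinuousLinearMap.fst ℝ ℝ (ℝ × ℝ)) (x, y, z) := hasFDerivAt_fst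
  have hy : HasFDerivAt (fun q : ℝ × ℝ × ℝ => q.2.1)
      ((ContinuousLinearMap.fst ℝ ℝ ℝ).comp (ContinuousLinearMap.snd ℝ ℝ (ℝ × ℝ))) (x, y, z) :=
    hasFDerivAt_fst.comp _ hasFDerivAt_snd
  have hz : HasFDerivAt (fun q : ℝ × ℝ × ℝ => q.2.2)
      ((ContinuousLinearMap.snd ℝ ℝ ℝ).comp (ContinuousLinearMap.snd ℝ ℝ (ℝ × ℝ))) (x, y, z) :=
    hasFDerivAt_snd.comp _ hasFDerivAt_snd
  have hl : HasFDerivAt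
      (fun q : ℝ × ℝ × ℝ => (1 + h*q.2.1 + k*q.2.2)^2 + (1/2)*a*q.1*(2 - h*q.2.1 + k*q.2.2)) _
      (x, y, z) :=
    (hfd_sq (((hy.const_mul h).const_add 1).add (hz.const_mul k))).add
      ((hx.const_mul ((1/2)*a)).mul (((hy.const_mul h).const_sub 2).add (hz.const_mul k)))
  refine ⟨?_, fun hne => ⟨?_, ?_⟩⟩
  · rw [hl.fderiv]
    simp only [ContinuousLinearMap.add_apply, ContinuousLinearMap.smul_apply,
      ContinuousLinearMap.comp_apply, ContinuousLinearMap.neg_apply,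
      ContinuousLinearMap.coe_fst', ContinuousLinearMap.coe_snd', smul_eq_mul,
        Pi.add_apply, Pi.mul_apply]
    ring
  · refine first_integral_aux hl ((hfd_cube hx).mul hy) hne _
      (a*x - 6*h*y + 2*k*z) ?_ ?_ <;>
    · simp only [ContinuousLinearMap.add_apply, ContinuousLinearMap.smul_apply,
        ContinuousLinearMap.comp_apply, ContinuousLinearMap.neg_apply,
        ContinuousLinearMap.coe_fst', ContinuousLinearMap.coe_snd', smul_eq_mul,
        Pi.add_apply, Pi.mul_apply]
      ring
  · have hφ : HasFDerivAt (fun q : ℝ × ℝ × ℝ => q.2.1 * q.2.2^3) _ (x, y, z) :=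
      hy.mul (hfd_cube hz)
    rw [hφ.fderiv]
    simp only [ContinuousLinearMap.add_apply, ContinuousLinearMap.smul_apply,
      ContinuousLinearMap.comp_apply, ContinuousLinearMap.neg_apply,
      ContinuousLinearMap.coe_fst', ContinuousLinearMap.coe_snd', smul_eq_mul,
        Pi.add_apply, Pi.mul_apply]
    ring
end

section
/- For the system ẋ = x(1-(d/3)x-(e/3)y-(f/3)z), ẏ = y(-3+dx+ey+fz), ż = z(1-(d/3)x-(e/3)y-(f/3)z) (Case 41 subcase 2), the functions φ₁ = x³y and φ₂ = yz³ are first integrals. -/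
theorem case41_sub2_first_integrals (d e f : ℝ) :
    ∀ p : ℝ × ℝ × ℝ,
      fderiv ℝ (fun q : ℝ × ℝ × ℝ => q.1^3 * q.2.1) p
        (p.1*(1 - (d/3)*p.1 - (e/3)*p.2.1 - (f/3)*p.2.2),
         p.2.1*(-3 + d*p.1 + e*p.2.1 + f*p.2.2),
         p.2.2*(1 - (d/3)*p.1 - (e/3)*p.2.1 - (f/3)*p.2.2)) = 0 ∧
      fderiv ℝ (fun q : ℝ × ℝ × ℝ => q.2.1 * q.2.2^3) p
        (p.1*(1 - (d/3)*p.1 - (e/3)*p.2.1 - (f/3)*p.2.2),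
         p.2.1*(-3 + d*p.1 + e*p.2.1 + f*p.2.2),
         p.2.2*(1 - (d/3)*p.1 - (e/3)*p.2.1 - (f/3)*p.2.2)) = 0 := by
  intro p
  have hx : HasFDerivAt (fun q : ℝ × ℝ × ℝ => q.1)
      (ContinuousLinearMap.fst ℝ ℝ (ℝ × ℝ)) p := hasFDerivAt_fst
  have hy : HasFDerivAt (fun q : ℝ × ℝ × ℝ => q.2.1)
      ((ContinuousLinearMap.fst ℝ ℝ ℝ).comp (ContinuousLinearMap.snd ℝ ℝ (ℝ × ℝ))) p :=
    hasFDerivAt_fst.comp p hasFDerivAt_snd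
  have hz : HasFDerivAt (fun q : ℝ × ℝ × ℝ => q.2.2)
      ((ContinuousLinearMap.snd ℝ ℝ ℝ).comp (ContinuousLinearMap.snd ℝ ℝ (ℝ × ℝ))) p :=
    hasFDerivAt_snd.comp p hasFDerivAt_snd
  have e1 : (fun q : ℝ × ℝ × ℝ => q.1^3 * q.2.1) = fun q => q.1*q.1*q.1*q.2.1 := by
    funext q; ring
  have e2 : (fun q : ℝ × ℝ × ℝ => q.2.1 * q.2.2^3) = fun q => q.2.1*(q.2.2*q.2.2*q.2.2) := by
    funext q; ring
  have h1 := (((hx.mul hx).mul hx).mul hy).fderiv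
  have h2 := (hy.mul ((hz.mul hz).mul hz)).fderiv
  constructor
  · rw [e1]; erw [h1]; simp; ring
  · rw [e2]; erw [h2]; simp; ring
end
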